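/- Sum-of-squares bound for the chained Bell operator: for self-adjoint operators A₁, A₂, A₃, B₁, B₂, B₃ with A_x² = B_y² = 1 and [A_x, B_y] = 0, the chained Bell operator S = A₁B₁ + A₂B₁ + A₂B₂ + A₃B₂ + A₃B₃ − A₁B₃ satisfies ⟨ψ|S|ψ⟩ ≤ 6 cos(π/6) = 3√3 for every unit vector ψ. -/

import Mathlib

/-- Tsirelson bound of the 3-input chained Bell operator:
`S = A₁B₁ + A₂B₁ + A₂B₂ + A₃B₂ + A₃B₃ − A₁B₃` satisfies `⟨ψ|S|ψ⟩ ≤ 3√3`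
for commuting self-adjoint involutions and unit vectors `ψ`. -/
theorem chained3_tsirelson_bound
    (H : Type*) [NormedAddCommGroup H] [InnerProductSpace ℂ H] [CompleteSpace H]
    (A B : Fin 3 → (H →L[ℂ] H))
    (hAsa : ∀ x, IsSelfAdjoint (A x)) (hBsa : ∀ y, IsSelfAdjoint (B y))
    (hAsq : ∀ x, A x * A x = 1) (hBsq : ∀ y, B y * B y = 1)
    (hcomm : ∀ x y, A x * B y = B y * A x) :
    ∀ ψ : H, ‖ψ‖ = 1 →
      (inner ℂ ψ ((A 0 * B 0 + A 1 * B 0 + A 1 * B 1 + A 2 * B 1 + A 2 * B 2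
        - A 0 * B 2) ψ) : ℂ).re ≤ 3 * Real.sqrt 3 := by
  intro ψ hψ
  -- self-adjointness: move A across inner ℂ product
  have hAadj : ∀ x (φ : H), (inner ℂ (A x ψ) φ : ℂ) = inner ℂ ψ (A x φ) := by
    intro x φ
    have h := ContinuousLinearMap.adjoint_inner_left (A x) φ ψ
    rwa [ContinuousLinearMap.isSelfAdjoint_iff'.mp (hAsa x)] at h
  have hBadj : ∀ y (φ : H), (inner ℂ (B y ψ) φ : ℂ) = inner ℂ ψ (B y φ) := by
    intro y φ
    have h := ContinuousLinearMap.adjoint_inner_left (B y) φ ψ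
    rwa [ContinuousLinearMap.isSelfAdjoint_iff'.mp (hBsa y)] at h
  have hψ2 : (inner ℂ ψ ψ : ℂ) = 1 := by
    rw [inner_self_eq_norm_sq_to_K, hψ]; norm_num
  -- norms of images
  have hAnorm : ∀ x, ‖A x ψ‖ = 1 := by
    intro x
    have h1 : (inner ℂ (A x ψ) (A x ψ) : ℂ) = 1 := by
      rw [hAadj x (A x ψ)]
      have : A x (A x ψ) = ψ := by
        have := congrArg (fun T => T ψ) (hAsq x)
        simpa using this
      rw [this, hψ2]
    have h3 : ‖A x ψ‖^2 = 1 := by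
      have h2 := inner_self_eq_norm_sq (𝕜 := ℂ) (A x ψ)
      rw [h1] at h2; simpa using h2.symm
    nlinarith [norm_nonneg (A x ψ)]
  have hBnorm : ∀ y, ‖B y ψ‖ = 1 := by
    intro y
    have h1 : (inner ℂ (B y ψ) (B y ψ) : ℂ) = 1 := by
      rw [hBadj y (B y ψ)]
      have : B y (B y ψ) = ψ := by
        have := congrArg (fun T => T ψ) (hBsq y)
        simpa using this
      rw [this, hψ2]
    have h3 : ‖B y ψ‖^2 = 1 := by
      have h2 := inner_self_eq_norm_sq (𝕜 := ℂ) (B y ψ)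
      rw [h1] at h2; simpa using h2.symm
    nlinarith [norm_nonneg (B y ψ)]
  set u0 := A 0 ψ with hu0
  set u1 := A 1 ψ with hu1
  set u2 := A 2 ψ with hu2
  set v0 := B 0 ψ with hv0
  set v1 := B 1 ψ with hv1
  set v2 := B 2 ψ with hv2
  -- rewrite expectation value
  have hexp : (inner ℂ ψ ((A 0 * B 0 + A 1 * B 0 + A 1 * B 1 + A 2 * B 1 + A 2 * B 2
        - A 0 * B 2) ψ) : ℂ).re
      = (inner ℂ u0 (v0 - v2) : ℂ).re + (inner ℂ u1 (v0 + v1) : ℂ).re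
        + (inner ℂ u2 (v1 + v2) : ℂ).re := by
    have h : ∀ x y, (inner ℂ ψ ((A x * B y) ψ) : ℂ) = inner ℂ (A x ψ) (B y ψ) := by
      intro x y
      rw [hAadj x (B y ψ)]
      rfl
    simp only [ContinuousLinearMap.add_apply, ContinuousLinearMap.sub_apply,
      inner_add_right, inner_sub_right, h]
    simp [inner_sub_right, inner_add_right]
    ring
  rw [hexp]
  -- Cauchy–Schwarz on each term
  have cs : ∀ (u w : H), ‖u‖ = 1 → (inner ℂ u w : ℂ).re ≤ ‖w‖ := by
    intro u w hu
    have h := re_inner_le_norm (𝕜 := ℂ) u w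
    rw [RCLike.re_to_complex] at h
    rw [hu, one_mul] at h; exact h
  set a := ‖v0 - v2‖ with ha
  set b := ‖v0 + v1‖ with hb
  set c := ‖v1 + v2‖ with hc
  have h1 := cs u0 (v0 - v2) (hAnorm 0)
  have h2 := cs u1 (v0 + v1) (hAnorm 1)
  have h3 := cs u2 (v1 + v2) (hAnorm 2)
  -- key norm identity: a² + b² + c² = 9 - ‖v0 - v1 + v2‖²
  have hsum : a^2 + b^2 + c^2 + ‖v0 - v1 + v2‖^2 = 9 := by
    have e0 := hBnorm 0
    have e1 := hBnorm 1
    have e2 := hBnorm 2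
    have na : a^2 = ‖v0‖^2 - 2 * (inner ℂ v0 v2 : ℂ).re + ‖v2‖^2 := by
      rw [ha]; exact norm_sub_sq (𝕜 := ℂ) v0 v2
    have nb : b^2 = ‖v0‖^2 + 2 * (inner ℂ v0 v1 : ℂ).re + ‖v1‖^2 := by
      rw [hb]; exact norm_add_sq (𝕜 := ℂ) v0 v1
    have nc : c^2 = ‖v1‖^2 + 2 * (inner ℂ v1 v2 : ℂ).re + ‖v2‖^2 := by
      rw [hc]; exact norm_add_sq (𝕜 := ℂ) v1 v2
    have nd : ‖v0 - v1 + v2‖^2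
        = ‖v0 - v1‖^2 + 2 * (inner ℂ (v0 - v1) v2 : ℂ).re + ‖v2‖^2 :=
      norm_add_sq (𝕜 := ℂ) (v0 - v1) v2
    have nd1 : ‖v0 - v1‖^2 = ‖v0‖^2 - 2 * (inner ℂ v0 v1 : ℂ).re + ‖v1‖^2 :=
      norm_sub_sq (𝕜 := ℂ) v0 v1
    have nd2 : (inner ℂ (v0 - v1) v2 : ℂ).re = (inner ℂ v0 v2 : ℂ).re - (inner ℂ v1 v2 : ℂ).re := by
      rw [inner_sub_left]; simp
    rw [na, nb, nc, nd, nd1, nd2, e0, e1, e2]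
    ring
  have hle9 : a^2 + b^2 + c^2 ≤ 9 := by
    nlinarith [sq_nonneg ‖v0 - v1 + v2‖]
  have hnn : 0 ≤ a ∧ 0 ≤ b ∧ 0 ≤ c := ⟨norm_nonneg _, norm_nonneg _, norm_nonneg _⟩
  have hsqrt : Real.sqrt 3 ^ 2 = 3 := Real.sq_sqrt (by norm_num)
  have hsqrtnn : 0 ≤ Real.sqrt 3 := Real.sqrt_nonneg 3
  nlinarith [sq_nonneg (a - b), sq_nonneg (b - c), sq_nonneg (a - c),
    sq_nonneg (a + b + c - 3 * Real.sqrt 3), hnn.1, hnn.2.1, hnn.2.2]
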